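/- Suppose the eleven known blocks a, b, c, d, e, f, g, h, i, j, k are invertible and the blocks t, u, v, w, x, y, z satisfy the nine relations: z = z·e·z + z·d·g + j·b·z − k·c·i + j·a·g; a⁻¹·h⁻¹ − a⁻¹·b·j·h⁻¹ + a⁻¹·b·z·i⁻¹ = −d⁻¹·i⁻¹ − d⁻¹·e·j·h⁻¹ + d⁻¹·e·z·i⁻¹; f⁻¹·a⁻¹ − f⁻¹·g·d·a⁻¹ + k⁻¹·z·d·a⁻¹ = −k⁻¹·b⁻¹ − f⁻¹·g·e·b⁻¹ + k⁻¹·z·e·b⁻¹; t = −a·g·i⁻¹ − b·z·i⁻¹; u = −k⁻¹·j·a − k⁻¹·z·d; v = k⁻¹ − k⁻¹·j·b − k⁻¹·z·e; w = i⁻¹ − d·g·i⁻¹ − e·z·i⁻¹; x = a⁻¹ + f·k⁻¹·j − g·d·a⁻¹ + f·k⁻¹·z·d·a⁻¹; y = c⁻¹·k⁻¹·j·a·f + c⁻¹·k⁻¹·j·b·k + c⁻¹·k⁻¹·z·d·f + c⁻¹·k⁻¹·z·e·k. Then A·B = I and B·A = I. -/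

import Mathlib

open Matrix

/-- The 3×3 block matrix `[[m11, m12, m13], [m21, m22, m23], [m31, m32, m33]]`
assembled from n×n blocks. -/
def blk3 {F : Type*} [Field F] {n : ℕ}
    (m11 m12 m13 m21 m22 m23 m31 m32 m33 : Matrix (Fin n) (Fin n) F) :
    Matrix (Fin n ⊕ (Fin n ⊕ Fin n)) (Fin n ⊕ (Fin n ⊕ Fin n)) F :=
  Matrix.fromBlocks m11 (Matrix.fromCols m12 m13) (Matrix.fromRows m21 m31)
    (Matrix.fromBlocks m22 m23 m32 m33)

set_option maxHeartbeats 1600000 in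
lemma aux_main {R : Type*} [Ring R]
    (a b c d e f g h i j k z a' b' c' d' e' f' g' h' i' j' k' : R)
    (ha1 : a * a' = 1) (ha2 : a' * a = 1)
    (hb1 : b * b' = 1) (hb2 : b' * b = 1)
    (hc1 : c * c' = 1) (hc2 : c' * c = 1)
    (hd1 : d * d' = 1) (hd2 : d' * d = 1)
    (he1 : e * e' = 1) (he2 : e' * e = 1)
    (hf1 : f * f' = 1) (hf2 : f' * f = 1)
    (hg1 : g * g' = 1) (hg2 : g' * g = 1)
    (hh1 : h * h' = 1) (hh2 : h' * h = 1)
    (hi1 : i * i' = 1) (hi2 : i' * i = 1)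
    (hj1 : j * j' = 1) (hj2 : j' * j = 1)
    (hk1 : k * k' = 1) (hk2 : k' * k = 1)
    (hr1 : a' * h' - a' * b * j * h' + a' * b * z * i' = -(d' * i') - d' * e * j * h' + d' * e * z * i')
    (hr2 : f' * a' - f' * g * d * a' + k' * z * d * a' = -(k' * b') - f' * g * e * b' + k' * z * e * b')
    (hrq : z = z * e * z + z * d * g + j * b * z - k * c * i + j * a * g) :
    ((-(k' * j * a) - k' * z * d) * (a' + f * k' * j - g * d * a' + f * k' * z * d * a') + c * h + (k' - k' * j * b - k' * z * e) * j = 0) ∧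
    ((-(k' * j * a) - k' * z * d) * f + c * (c' * k' * j * a * f + c' * k' * j * b * k + c' * k' * z * d * f + c' * k' * z * e * k) + (k' - k' * j * b - k' * z * e) * k = 1) ∧
    ((-(k' * j * a) - k' * z * d) * g + c * i + (k' - k' * j * b - k' * z * e) * z = 0) ∧
    ((a' + f * k' * j - g * d * a' + f * k' * z * d * a') * a + f * (-(k' * j * a) - k' * z * d) + g * d = 1) ∧
    ((a' + f * k' * j - g * d * a' + f * k' * z * d * a') * (-(a * g * i') - b * z * i') + f * c + g * (i' - d * g * i' - e * z * i') = 0) ∧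
    ((a' + f * k' * j - g * d * a' + f * k' * z * d * a') * b + f * (k' - k' * j * b - k' * z * e) + g * e = 0) ∧
    (j * a + k * (-(k' * j * a) - k' * z * d) + z * d = 0) ∧
    (j * (-(a * g * i') - b * z * i') + k * c + z * (i' - d * g * i' - e * z * i') = 0) ∧
    (j * b + k * (k' - k' * j * b - k' * z * e) + z * e = 1) := by
  have zc0 : (a * a' - 1) = 0 := sub_eq_zero_of_eq ha1
  have zc1 : (a' * a - 1) = 0 := sub_eq_zero_of_eq ha2
  have zc3 : (b' * b - 1) = 0 := sub_eq_zero_of_eq hb2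
  have zc4 : (c * c' - 1) = 0 := sub_eq_zero_of_eq hc1
  have zc6 : (d * d' - 1) = 0 := sub_eq_zero_of_eq hd1
  have zc10 : (f * f' - 1) = 0 := sub_eq_zero_of_eq hf1
  have zc15 : (h' * h - 1) = 0 := sub_eq_zero_of_eq hh2
  have zc16 : (i * i' - 1) = 0 := sub_eq_zero_of_eq hi1
  have zc20 : (k * k' - 1) = 0 := sub_eq_zero_of_eq hk1
  have zc21 : (k' * k - 1) = 0 := sub_eq_zero_of_eq hk2
  have zr1 : (a' * h' - a' * b * j * h' + a' * b * z * i' - (-(d' * i') - d' * e * j * h' + d' * e * z * i')) = 0 := sub_eq_zero_of_eq hr1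
  have zr2 : (f' * a' - f' * g * d * a' + k' * z * d * a' - (-(k' * b') - f' * g * e * b' + k' * z * e * b')) = 0 := sub_eq_zero_of_eq hr2
  have zrq : (z * e * z + z * d * g + j * b * z - k * c * i + j * a * g - z) = 0 := sub_eq_zero_of_eq hrq.symm
  have zb25 : (d * a' * b * z * i' - d * a' * b * j * h' - e * z * i' + e * j * h' + d * a' * h' + i') = 0 := by
    have key : (d * a' * b * z * i' - d * a' * b * j * h' - e * z * i' + e * j * h' + d * a' * h' + i') = (d * d' - 1) * e * z * i' +
        d * (a' * h' - a' * b * j * h' + a' * b * z * i' - (-(d' * i') - d' * e * j * h' + d' * e * z * i')) -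
        (d * d' - 1) * e * j * h' -
        (d * d' - 1) * i' := by noncomm_ring
    rw [zc6, zr1] at key
    simp only [mul_zero, zero_mul, add_zero, zero_add, neg_zero, sub_zero, zero_sub, neg_neg] at key
    exact key
  have zb28 : (k' * z * d * a' * b - f' * g * d * a' * b - k' * z * e + f' * a' * b + f' * g * e + k') = 0 := by
    have key : (k' * z * d * a' * b - f' * g * d * a' * b - k' * z * e + f' * a' * b + f' * g * e + k') = (f' * a' - f' * g * d * a' + k' * z * d * a' - (-(k' * b') - f' * g * e * b' + k' * z * e * b')) * b +
        k' * z * e * (b' * b - 1) -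
        f' * g * e * (b' * b - 1) -
        k' * (b' * b - 1) := by noncomm_ring
    rw [zc3, zr2] at key
    simp only [mul_zero, zero_mul, add_zero, zero_add, neg_zero, sub_zero, zero_sub, neg_neg] at key
    exact key
  have zb32 : (-(k' * z * d * a' * h') + f' * a' * b * z * i' - f' * a' * b * j * h' + f' * g * d * a' * h' - k' * j * h' + f' * g * i') = 0 := by
    have key : (-(k' * z * d * a' * h') + f' * a' * b * z * i' - f' * a' * b * j * h' + f' * g * d * a' * h' - k' * j * h' + f' * g * i') = (k' * z * d * a' * b - f' * g * d * a' * b - k' * z * e + f' * a' * b + f' * g * e + k') * z * i' -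
        k' * z * (d * a' * b * z * i' - d * a' * b * j * h' - e * z * i' + e * j * h' + d * a' * h' + i') -
        (k' * z * d * a' * b - f' * g * d * a' * b - k' * z * e + f' * a' * b + f' * g * e + k') * j * h' +
        f' * g * (d * a' * b * z * i' - d * a' * b * j * h' - e * z * i' + e * j * h' + d * a' * h' + i') := by noncomm_ring
    rw [zb25, zb28] at key
    simp only [mul_zero, zero_mul, add_zero, zero_add, neg_zero, sub_zero, zero_sub, neg_neg] at key
    exact key
  have zb35 : (f' * a' * b * z * i' * h - k' * z * d * a' - f' * a' * b * j + f' * g * i' * h + f' * g * d * a' - k' * j) = 0 := by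
    have key : (f' * a' * b * z * i' * h - k' * z * d * a' - f' * a' * b * j + f' * g * i' * h + f' * g * d * a' - k' * j) = (-(k' * z * d * a' * h') + f' * a' * b * z * i' - f' * a' * b * j * h' + f' * g * d * a' * h' - k' * j * h' + f' * g * i') * h +
        k' * z * d * a' * (h' * h - 1) +
        f' * a' * b * j * (h' * h - 1) -
        f' * g * d * a' * (h' * h - 1) +
        k' * j * (h' * h - 1) := by noncomm_ring
    rw [zc15, zb32] at key
    simp only [mul_zero, zero_mul, add_zero, zero_add, neg_zero, sub_zero, zero_sub, neg_neg] at key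
    exact key
  have zb36 : (-(a' * b * z * i' * h) + f * k' * z * d * a' + a' * b * j - g * i' * h - g * d * a' + f * k' * j) = 0 := by
    have key : (-(a' * b * z * i' * h) + f * k' * z * d * a' + a' * b * j - g * i' * h - g * d * a' + f * k' * j) = (f * f' - 1) * a' * b * z * i' * h -
        f * (f' * a' * b * z * i' * h - k' * z * d * a' - f' * a' * b * j + f' * g * i' * h + f' * g * d * a' - k' * j) -
        (f * f' - 1) * a' * b * j +
        (f * f' - 1) * g * i' * h +
        (f * f' - 1) * g * d * a' := by noncomm_ring
    rw [zc10, zb35] at key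
    simp only [mul_zero, zero_mul, add_zero, zero_add, neg_zero, sub_zero, zero_sub, neg_neg] at key
    exact key
  have zb38 : (a * f * k' * z * d * a' - b * z * i' * h - a * g * i' * h - a * g * d * a' + a * f * k' * j + b * j) = 0 := by
    have key : (a * f * k' * z * d * a' - b * z * i' * h - a * g * i' * h - a * g * d * a' + a * f * k' * j + b * j) = (a * a' - 1) * b * z * i' * h +
        a * (-(a' * b * z * i' * h) + f * k' * z * d * a' + a' * b * j - g * i' * h - g * d * a' + f * k' * j) -
        (a * a' - 1) * b * j := by noncomm_ring
    rw [zc0, zb36] at key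
    simp only [mul_zero, zero_mul, add_zero, zero_add, neg_zero, sub_zero, zero_sub, neg_neg] at key
    exact key
  have zb39 : (d * f * k' * z * d * a' - e * z * i' * h - d * g * i' * h - d * g * d * a' + d * f * k' * j + i' * h + e * j + d * a') = 0 := by
    have key : (d * f * k' * z * d * a' - e * z * i' * h - d * g * i' * h - d * g * d * a' + d * f * k' * j + i' * h + e * j + d * a') = (d * a' * b * z * i' - d * a' * b * j * h' - e * z * i' + e * j * h' + d * a' * h' + i') * h +
        d * (-(a' * b * z * i' * h) + f * k' * z * d * a' + a' * b * j - g * i' * h - g * d * a' + f * k' * j) +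
        d * a' * b * j * (h' * h - 1) -
        e * j * (h' * h - 1) -
        d * a' * (h' * h - 1) := by noncomm_ring
    rw [zc15, zb25, zb36] at key
    simp only [mul_zero, zero_mul, add_zero, zero_add, neg_zero, sub_zero, zero_sub, neg_neg] at key
    exact key
  refine ⟨?_, ?_, ?_, ?_, ?_, ?_, ?_, ?_, ?_⟩
  · have key : (-(k' * j * a) - k' * z * d) * (a' + f * k' * j - g * d * a' + f * k' * z * d * a') + c * h + (k' - k' * j * b - k' * z * e) * j = -(k' * z * (d * f * k' * z * d * a' - e * z * i' * h - d * g * i' * h - d * g * d * a' + d * f * k' * j + i' * h + e * j + d * a')) -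
        k' * j * (a * f * k' * z * d * a' - b * z * i' * h - a * g * i' * h - a * g * d * a' + a * f * k' * j + b * j) -
        k' * (z * e * z + z * d * g + j * b * z - k * c * i + j * a * g - z) * i' * h -
        k' * k * c * (i * i' - 1) * h -
        (k' * k - 1) * c * h -
        k' * j * (a * a' - 1) := by noncomm_ring
    rw [zc0, zc16, zc21, zrq, zb38, zb39] at key
    simp only [mul_zero, zero_mul, add_zero, zero_add, neg_zero, sub_zero, zero_sub, neg_neg] at key
    exact key
  · have key : (-(k' * j * a) - k' * z * d) * f + c * (c' * k' * j * a * f + c' * k' * j * b * k + c' * k' * z * d * f + c' * k' * z * e * k) + (k' - k' * j * b - k' * z * e) * k - 1 = (c * c' - 1) * k' * z * e * k +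
        (c * c' - 1) * k' * z * d * f +
        (c * c' - 1) * k' * j * b * k +
        (c * c' - 1) * k' * j * a * f +
        (k' * k - 1) := by noncomm_ring
    rw [zc4, zc21] at key
    simp only [mul_zero, zero_mul, add_zero, zero_add, neg_zero, sub_zero, zero_sub, neg_neg] at key
    exact sub_eq_zero.mp key
  · have key : (-(k' * j * a) - k' * z * d) * g + c * i + (k' - k' * j * b - k' * z * e) * z = -(k' * (z * e * z + z * d * g + j * b * z - k * c * i + j * a * g - z)) -
        (k' * k - 1) * c * i := by noncomm_ring
    rw [zc21, zrq] at key
    simp only [mul_zero, zero_mul, add_zero, zero_add, neg_zero, sub_zero, zero_sub, neg_neg] at key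
    exact key
  · have key : (a' + f * k' * j - g * d * a' + f * k' * z * d * a') * a + f * (-(k' * j * a) - k' * z * d) + g * d - 1 = f * k' * z * d * (a' * a - 1) -
        g * d * (a' * a - 1) +
        (a' * a - 1) := by noncomm_ring
    rw [zc1] at key
    simp only [mul_zero, zero_mul, add_zero, zero_add, neg_zero, sub_zero, zero_sub, neg_neg] at key
    exact sub_eq_zero.mp key
  · have key : (a' + f * k' * j - g * d * a' + f * k' * z * d * a') * (-(a * g * i') - b * z * i') + f * c + g * (i' - d * g * i' - e * z * i') = -(f * k' * z * (d * a' * b * z * i' - d * a' * b * j * h' - e * z * i' + e * j * h' + d * a' * h' + i')) -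
        f * (k' * z * d * a' * b - f' * g * d * a' * b - k' * z * e + f' * a' * b + f' * g * e + k') * j * h' -
        f * k' * z * d * (a' * a - 1) * g * i' -
        (f * f' - 1) * g * d * a' * b * j * h' +
        g * (d * a' * b * z * i' - d * a' * b * j * h' - e * z * i' + e * j * h' + d * a' * h' + i') +
        g * d * (a' * a - 1) * g * i' -
        f * k' * (z * e * z + z * d * g + j * b * z - k * c * i + j * a * g - z) * i' -
        f * (-(k' * z * d * a' * h') + f' * a' * b * z * i' - f' * a' * b * j * h' + f' * g * d * a' * h' - k' * j * h' + f' * g * i') -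
        f * k' * k * c * (i * i' - 1) +
        (f * f' - 1) * a' * b * z * i' +
        (f * f' - 1) * g * e * j * h' +
        (f * f' - 1) * g * d * a' * h' -
        (a' * a - 1) * g * i' -
        f * (k' * k - 1) * c +
        (f * f' - 1) * g * i' := by noncomm_ring
    rw [zc1, zc10, zc16, zc21, zrq, zb25, zb28, zb32] at key
    simp only [mul_zero, zero_mul, add_zero, zero_add, neg_zero, sub_zero, zero_sub, neg_neg] at key
    exact key
  · have key : (a' + f * k' * j - g * d * a' + f * k' * z * d * a') * b + f * (k' - k' * j * b - k' * z * e) + g * e = f * (k' * z * d * a' * b - f' * g * d * a' * b - k' * z * e + f' * a' * b + f' * g * e + k') +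
        (f * f' - 1) * g * d * a' * b -
        (f * f' - 1) * a' * b -
        (f * f' - 1) * g * e := by noncomm_ring
    rw [zc10, zb28] at key
    simp only [mul_zero, zero_mul, add_zero, zero_add, neg_zero, sub_zero, zero_sub, neg_neg] at key
    exact key
  · have key : j * a + k * (-(k' * j * a) - k' * z * d) + z * d = -((k * k' - 1) * z * d) -
        (k * k' - 1) * j * a := by noncomm_ring
    rw [zc20] at key
    simp only [mul_zero, zero_mul, add_zero, zero_add, neg_zero, sub_zero, zero_sub, neg_neg] at key
    exact key
  · have key : j * (-(a * g * i') - b * z * i') + k * c + z * (i' - d * g * i' - e * z * i') = -((z * e * z + z * d * g + j * b * z - k * c * i + j * a * g - z) * i') -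
        k * c * (i * i' - 1) := by noncomm_ring
    rw [zc16, zrq] at key
    simp only [mul_zero, zero_mul, add_zero, zero_add, neg_zero, sub_zero, zero_sub, neg_neg] at key
    exact key
  · have key : j * b + k * (k' - k' * j * b - k' * z * e) + z * e - 1 = -((k * k' - 1) * z * e) -
        (k * k' - 1) * j * b +
        (k * k' - 1) := by noncomm_ring
    rw [zc20] at key
    simp only [mul_zero, zero_mul, add_zero, zero_add, neg_zero, sub_zero, zero_sub, neg_neg] at key
    exact sub_eq_zero.mp key

section blk3helpers

variable {F : Type*} [Field F] {n : ℕ}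

lemma fromColumns_add' {m n₁ n₂ : Type*} {R : Type*} [AddCommMonoid R]
    (A₁ : Matrix m n₁ R) (A₂ : Matrix m n₂ R) (B₁ : Matrix m n₁ R) (B₂ : Matrix m n₂ R) :
    Matrix.fromCols A₁ A₂ + Matrix.fromCols B₁ B₂ =
      Matrix.fromCols (A₁ + B₁) (A₂ + B₂) := by
  ext _ (_ | _) <;> simp [Matrix.fromCols, Matrix.fromCols_apply_inl, Matrix.fromCols_apply_inr]

lemma fromRows_add' {m₁ m₂ n : Type*} {R : Type*} [AddCommMonoid R]
    (A₁ : Matrix m₁ n R) (A₂ : Matrix m₂ n R) (B₁ : Matrix m₁ n R) (B₂ : Matrix m₂ n R) :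
    Matrix.fromRows A₁ A₂ + Matrix.fromRows B₁ B₂ =
      Matrix.fromRows (A₁ + B₁) (A₂ + B₂) := by
  ext (_ | _) _ <;> simp [Matrix.add_apply, Matrix.fromRows_apply_inl, Matrix.fromRows_apply_inr]

lemma blk3_mul (m11 m12 m13 m21 m22 m23 m31 m32 m33
    n11 n12 n13 n21 n22 n23 n31 n32 n33 : Matrix (Fin n) (Fin n) F) :
    blk3 m11 m12 m13 m21 m22 m23 m31 m32 m33 * blk3 n11 n12 n13 n21 n22 n23 n31 n32 n33 =
    blk3 (m11*n11 + m12*n21 + m13*n31) (m11*n12 + m12*n22 + m13*n32) (m11*n13 + m12*n23 + m13*n33)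
         (m21*n11 + m22*n21 + m23*n31) (m21*n12 + m22*n22 + m23*n32) (m21*n13 + m22*n23 + m23*n33)
         (m31*n11 + m32*n21 + m33*n31) (m31*n12 + m32*n22 + m33*n32) (m31*n13 + m32*n23 + m33*n33) := by
  simp only [blk3, Matrix.fromBlocks_multiply, Matrix.fromCols_mul_fromRows,
    Matrix.mul_fromCols, Matrix.fromCols_mul_fromBlocks, Matrix.fromRows_mul,
    Matrix.fromBlocks_mul_fromRows, Matrix.fromRows_mul_fromCols, Matrix.fromBlocks_add,
    Matrix.fromCols_fromRows_eq_fromBlocks, Matrix.fromRows_fromCols_eq_fromBlocks,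
    fromColumns_add', fromRows_add', add_assoc]

lemma blk3_one : blk3 (1 : Matrix (Fin n) (Fin n) F) 0 0 0 1 0 0 0 1 = 1 := by
  simp only [blk3, Matrix.fromCols_zero, Matrix.fromRows_zero, Matrix.fromBlocks_one]

end blk3helpers

theorem stmt_17 {F : Type*} [Field F] {n : ℕ} (hn : 0 < n)
    (a b c d e f g h i j k : Matrix (Fin n) (Fin n) F)
    (ha : IsUnit a) (hb : IsUnit b) (hc : IsUnit c) (hd : IsUnit d) (he : IsUnit e)
    (hf : IsUnit f) (hg : IsUnit g) (hh : IsUnit h) (hi : IsUnit i) (hj : IsUnit j)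
    (hk : IsUnit k)
    (t u v w x y z : Matrix (Fin n) (Fin n) F)
    (hquad : z = z * e * z + z * d * g + j * b * z - k * c * i + j * a * g)
    (hlin1 : a⁻¹ * h⁻¹ - a⁻¹ * b * j * h⁻¹ + a⁻¹ * b * z * i⁻¹ =
      -(d⁻¹ * i⁻¹) - d⁻¹ * e * j * h⁻¹ + d⁻¹ * e * z * i⁻¹)
    (hlin2 : f⁻¹ * a⁻¹ - f⁻¹ * g * d * a⁻¹ + k⁻¹ * z * d * a⁻¹ =
      -(k⁻¹ * b⁻¹) - f⁻¹ * g * e * b⁻¹ + k⁻¹ * z * e * b⁻¹)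
    (ht : t = -(a * g * i⁻¹) - b * z * i⁻¹)
    (hu : u = -(k⁻¹ * j * a) - k⁻¹ * z * d)
    (hv : v = k⁻¹ - k⁻¹ * j * b - k⁻¹ * z * e)
    (hw : w = i⁻¹ - d * g * i⁻¹ - e * z * i⁻¹)
    (hx : x = a⁻¹ + f * k⁻¹ * j - g * d * a⁻¹ + f * k⁻¹ * z * d * a⁻¹)
    (hy : y = c⁻¹ * k⁻¹ * j * a * f + c⁻¹ * k⁻¹ * j * b * k +
      c⁻¹ * k⁻¹ * z * d * f + c⁻¹ * k⁻¹ * z * e * k) :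
    blk3 a t b u c v d w e * blk3 x f g h y i j k z = 1 ∧
    blk3 x f g h y i j k z * blk3 a t b u c v d w e = 1 := by
  have inv1 : ∀ m : Matrix (Fin n) (Fin n) F, IsUnit m → m * m⁻¹ = 1 := fun m hm =>
    Matrix.mul_nonsing_inv m ((Matrix.isUnit_iff_isUnit_det m).mp hm)
  have inv2 : ∀ m : Matrix (Fin n) (Fin n) F, IsUnit m → m⁻¹ * m = 1 := fun m hm =>
    Matrix.nonsing_inv_mul m ((Matrix.isUnit_iff_isUnit_det m).mp hm)
  obtain ⟨e1, e2, e3, f1, f2, f3, g1, g2, g3⟩ :=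
    aux_main a b c d e f g h i j k z a⁻¹ b⁻¹ c⁻¹ d⁻¹ e⁻¹ f⁻¹ g⁻¹ h⁻¹ i⁻¹ j⁻¹ k⁻¹
      (inv1 a ha) (inv2 a ha) (inv1 b hb) (inv2 b hb) (inv1 c hc) (inv2 c hc)
      (inv1 d hd) (inv2 d hd) (inv1 e he) (inv2 e he) (inv1 f hf) (inv2 f hf)
      (inv1 g hg) (inv2 g hg) (inv1 h hh) (inv2 h hh) (inv1 i hi) (inv2 i hi)
      (inv1 j hj) (inv2 j hj) (inv1 k hk) (inv2 k hk) hlin1 hlin2 hquad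
  rw [← hu, ← hx, ← hv] at e1
  rw [← hu, ← hy, ← hv] at e2
  rw [← hu, ← hv] at e3
  rw [← hx, ← hu] at f1
  rw [← hx, ← ht, ← hw] at f2
  rw [← hx, ← hv] at f3
  rw [← hu] at g1
  rw [← ht, ← hw] at g2
  rw [← hv] at g3
  -- middle row of B*A
  have hcinv : c⁻¹ * c = 1 := inv2 c hc
  have hp : h * a + y * u + i * d = 0 := by
    have h1 : c * (h * a + y * u + i * d) = 0 := by
      have key : c * (h * a + y * u + i * d) =
          (u * x + c * h + v * j) * a + (u * f + c * y + v * k) * u +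
            (u * g + c * i + v * z) * d -
            u * (x * a + f * u + g * d) - v * (j * a + k * u + z * d) := by
        noncomm_ring
      rw [e1, e2, e3, f1, g1] at key
      simpa using key
    calc h * a + y * u + i * d = c⁻¹ * (c * (h * a + y * u + i * d)) := by
          rw [← mul_assoc, hcinv, one_mul]
      _ = 0 := by rw [h1, mul_zero]
  have hq : h * t + y * c + i * w = 1 := by
    have h1 : c * (h * t + y * c + i * w) = c := by
      have key : c * (h * t + y * c + i * w) =
          (u * x + c * h + v * j) * t + (u * f + c * y + v * k) * c +
            (u * g + c * i + v * z) * w -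
            u * (x * t + f * c + g * w) - v * (j * t + k * c + z * w) := by
        noncomm_ring
      rw [e1, e2, e3, f2, g2] at key
      simpa using key
    calc h * t + y * c + i * w = c⁻¹ * (c * (h * t + y * c + i * w)) := by
          rw [← mul_assoc, hcinv, one_mul]
      _ = c⁻¹ * c := by rw [h1]
      _ = 1 := hcinv
  have hr : h * b + y * v + i * e = 0 := by
    have h1 : c * (h * b + y * v + i * e) = 0 := by
      have key : c * (h * b + y * v + i * e) =
          (u * x + c * h + v * j) * b + (u * f + c * y + v * k) * v +
            (u * g + c * i + v * z) * e -
            u * (x * b + f * v + g * e) - v * (j * b + k * v + z * e) := by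
        noncomm_ring
      rw [e1, e2, e3, f3, g3] at key
      simpa using key
    calc h * b + y * v + i * e = c⁻¹ * (c * (h * b + y * v + i * e)) := by
          rw [← mul_assoc, hcinv, one_mul]
      _ = 0 := by rw [h1, mul_zero]
  have hBA : blk3 x f g h y i j k z * blk3 a t b u c v d w e = 1 := by
    rw [blk3_mul, f1, f2, f3, hp, hq, hr, g1, g2, g3, blk3_one]
  exact ⟨mul_eq_one_comm.mpr hBA, hBA⟩
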